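/- Let $G$ be a group and let $f : G \to \mathbb{C}$ be a positive-definite function (for every $n$ and every $g_1, \dots, g_n \in G$, the $n \times n$ matrix $\big(f(g_i^{-1} g_j)\big)_{i,j}$ is positive semidefinite) such that $f(1) = 1$ and $|f(g)| \in \{0, 1\}$ for every $g \in G$. Let $H := \{g \in G : f(g) \neq 0\}$. Then: (a) $f(g_1 g_2) = f(g_1) f(g_2)$ whenever $g_1 \in H$ or $g_2 \in H$; and (b) $H$ is a subgroup of $G$ and the restriction of $f$ to $H$ is a group homomorphism from $H$ into the circle group $\{z \in \mathbb{C} : |z| = 1\}$. -/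

import Mathlib

open scoped ComplexOrder

open Matrix

private lemma pre_conj {G : Type*} [Group G] (f : G → ℂ)
    (hpd : ∀ (n : ℕ) (g : Fin n → G),
      (Matrix.of fun i j => f ((g i)⁻¹ * g j)).PosSemidef) (g : G) :
    f g⁻¹ = (starRingEnd ℂ) (f g) := by
  have h := (hpd 2 ![1, g]).1
  have h2 := h.apply 0 1
  simp at h2
  rw [← h2, RingHomInvPair.comp_apply_eq]

private lemma pre_mul {G : Type*} [Group G] (f : G → ℂ)
    (hpd : ∀ (n : ℕ) (g : Fin n → G),
      (Matrix.of fun i j => f ((g i)⁻¹ * g j)).PosSemidef)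
    (hf1 : f 1 = 1) (a b : G) (ha : ‖f a‖ = 1) :
    f (a * b) = f a * f b := by
  have hαα : f a * (starRingEnd ℂ) (f a) = 1 := by
    rw [Complex.mul_conj, Complex.normSq_eq_norm_sq, ha]; norm_num
  have hpsd := hpd 3 ![1, a, a * b]
  set M := (Matrix.of fun i j => f (((![1, a, a*b]) i)⁻¹ * (![1, a, a*b]) j)) with hM
  set v : Fin 3 → ℂ := ![1, -(starRingEnd ℂ) (f a), 0] with hv
  have hz : star v ⬝ᵥ M *ᵥ v = 0 := by
    simp [dotProduct, Matrix.mulVec, Fin.sum_univ_three, hM, hv, hf1,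
      pre_conj f hpd]
    ring_nf
    rw [hαα]
    ring
  have hker := (hpsd.dotProduct_mulVec_zero_iff v).mp hz
  have h2 := congrFun hker 2
  simp [Matrix.mulVec, dotProduct, Fin.sum_univ_three, hM, hv, hf1, _root_.mul_inv_rev,
    pre_conj f hpd] at h2
  rw [← _root_.mul_inv_rev, pre_conj f hpd] at h2
  have h3 : (starRingEnd ℂ) (f (a * b)) = (starRingEnd ℂ) (f a * f b) := by
    rw [_root_.map_mul]; linear_combination h2
  have h4 := congrArg (starRingEnd ℂ) h3
  simpa using h4

private lemma pre_abs_one {G : Type*} [Group G] (f : G → ℂ)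
    (habs : ∀ g : G, ‖f g‖ = 0 ∨ ‖f g‖ = 1)
    {g : G} (hg : f g ≠ 0) : ‖f g‖ = 1 := by
  rcases habs g with h | h
  · exact absurd (by simpa using h) hg
  · exact h

/-- Let `G` be a group and `f : G → ℂ` a positive-definite function with `f 1 = 1` and
`|f g| ∈ {0,1}` for all `g` (a pre-homomorphism).  With `H = {g : f g ≠ 0}`:
(a) `f (g₁ g₂) = f g₁ * f g₂` whenever `g₁ ∈ H` or `g₂ ∈ H`; and
(b) `H` is a subgroup of `G` and `f|_H` is a group homomorphism into the circle group. -/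
theorem prehomomorphism_supporting_subgroup
    {G : Type*} [Group G] (f : G → ℂ)
    -- `f` is positive definite
    (hpd : ∀ (n : ℕ) (g : Fin n → G),
      (Matrix.of fun i j => f ((g i)⁻¹ * g j)).PosSemidef)
    (hf1 : f 1 = 1)
    (habs : ∀ g : G, ‖f g‖ = 0 ∨ ‖f g‖ = 1) :
    -- (a)
    (∀ g₁ g₂ : G, (f g₁ ≠ 0 ∨ f g₂ ≠ 0) → f (g₁ * g₂) = f g₁ * f g₂) ∧
    -- (b): `H = {g : f g ≠ 0}` is a subgroup and `f|_H` maps into the unit circle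
    ((1 : G) ∈ {g : G | f g ≠ 0} ∧
      (∀ g ∈ {g : G | f g ≠ 0}, g⁻¹ ∈ {g : G | f g ≠ 0}) ∧
      (∀ g ∈ {g : G | f g ≠ 0}, ∀ h ∈ {g : G | f g ≠ 0}, g * h ∈ {g : G | f g ≠ 0}) ∧
      (∀ g ∈ {g : G | f g ≠ 0}, ‖f g‖ = 1) ∧
      (∀ g ∈ {g : G | f g ≠ 0}, ∀ h ∈ {g : G | f g ≠ 0}, f (g * h) = f g * f h)) := by
  have key : ∀ g₁ g₂ : G, (f g₁ ≠ 0 ∨ f g₂ ≠ 0) → f (g₁ * g₂) = f g₁ * f g₂ := by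
    intro a b hab
    rcases hab with ha | hb
    · exact pre_mul f hpd hf1 a b (pre_abs_one f habs ha)
    · have hb1 : ‖f b⁻¹‖ = 1 := by
        rw [pre_conj f hpd]; simpa using pre_abs_one f habs hb
      have h := pre_mul f hpd hf1 b⁻¹ a⁻¹ hb1
      have h2 := congrArg (starRingEnd ℂ) h
      rw [pre_conj f hpd, pre_conj f hpd, _root_.map_mul, RingHomInvPair.comp_apply_eq,
        RingHomInvPair.comp_apply_eq] at h2
      rw [← _root_.mul_inv_rev, pre_conj f hpd, RingHomInvPair.comp_apply_eq] at h2
      rw [h2]; ring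
  refine ⟨key, by simp [hf1], ?_, ?_, fun g hg => pre_abs_one f habs hg, ?_⟩
  · intro g hg
    simp only [Set.mem_setOf_eq] at hg ⊢
    rw [pre_conj f hpd]
    simpa using hg
  · intro g hg h hh
    simp only [Set.mem_setOf_eq] at hg hh ⊢
    rw [key g h (Or.inl hg)]
    exact mul_ne_zero hg hh
  · intro g hg h hh
    exact key g h (Or.inl hg)
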